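/- In type \(C_n\), the positive roots decompose as the disjoint union \(\Delta^+ = \bigsqcup_{i=1}^{n} H_{\beta_i}\), where \(H_{\beta_i} = \{\alpha \in \Delta^+ \mid (\alpha,\beta_i) > 0,\ (\alpha,\beta_k)=0 \text{ for } k < i\}\) and \(\beta_i = 2\alpha_i + \cdots + 2\alpha_{n-1} + \alpha_n\). -/
import Mathlib


/-- The standard basis vector `eᵢ` of `ℝ^∞` (1-based indexing). -/
noncomputable def e (i : ℕ) : ℕ → ℝ := fun m => if m = i then 1 else 0

/-- The standard inner product (on vectors supported in `{0,…,n}`). -/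
noncomputable def dotN (n : ℕ) (x y : ℕ → ℝ) : ℝ := ∑ m ∈ Finset.range (n + 1), x m * y m

/-- The positive roots of type `Cₙ`: `eᵢ - eⱼ`, `eᵢ + eⱼ` (`i < j`) and `2eᵢ`. -/
def DeltaCpos (n : ℕ) : Set (ℕ → ℝ) :=
  {v | ∃ i j, 1 ≤ i ∧ i ≤ j ∧ j ≤ n ∧ ((i < j ∧ v = e i - e j) ∨ v = e i + e j)}

/-- `H_{βᵢ} = {α ∈ Δ⁺ ∣ (α,βᵢ) > 0, (α,βₖ) = 0 for k < i}` where `βᵢ = 2eᵢ`. -/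
noncomputable def Hbeta (n i : ℕ) : Set (ℕ → ℝ) :=
  {v | v ∈ DeltaCpos n ∧ 0 < dotN n v ((2 : ℝ) • e i) ∧
    ∀ k, 1 ≤ k → k < i → dotN n v ((2 : ℝ) • e k) = 0}

lemma dot2 (n : ℕ) (v : ℕ → ℝ) (k : ℕ) (hk : k ≤ n) :
    dotN n v ((2 : ℝ) • e k) = 2 * v k := by
  unfold dotN
  rw [Finset.sum_eq_single k]
  · simp [e]; ring
  · intro m _ hm; simp [e, hm]
  · intro h; exact absurd (Finset.mem_range.mpr (by omega)) h

/-- In type `Cₙ`, the positive roots decompose as the disjoint union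
`Δ⁺ = ⨆ᵢ H_{βᵢ}`, `1 ≤ i ≤ n`. -/
theorem deltaCpos_decomposition (n : ℕ) (hn : 2 ≤ n) :
    (DeltaCpos n = ⋃ i ∈ Finset.Icc 1 n, Hbeta n i) ∧
    (∀ i j, 1 ≤ i → i ≤ n → 1 ≤ j → j ≤ n → i ≠ j →
      Disjoint (Hbeta n i) (Hbeta n j)) := by
  constructor
  · ext v
    simp only [Set.mem_iUnion, Finset.mem_Icc]
    constructor
    · rintro ⟨i, j, hi, hij, hj, hv⟩
      refine ⟨i, ⟨hi, le_trans hij hj⟩, ⟨⟨i, j, hi, hij, hj, hv⟩, ?_, ?_⟩⟩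
      · rw [dot2 n v i (le_trans hij hj)]
        rcases hv with ⟨hlt, rfl⟩ | rfl
        · simp [e, Pi.sub_apply, hlt.ne]
        · simp only [Pi.add_apply, e, if_pos rfl]
          split_ifs <;> norm_num
      · intro k hk hki
        rw [dot2 n v k (by omega)]
        have hki' : k ≠ i := by omega
        have hkj : k ≠ j := by omega
        rcases hv with ⟨hlt, rfl⟩ | rfl <;>
          simp [e, Pi.sub_apply, Pi.add_apply, hki', hkj]
    · rintro ⟨i, _, hmem, _, _⟩; exact hmem
  · intro i j hi hin hj hjn hij
    rw [Set.disjoint_left]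
    rintro v ⟨_, hpos_i, horth_i⟩ ⟨_, hpos_j, horth_j⟩
    rcases lt_or_gt_of_ne hij with h | h
    · exact absurd (horth_j i hi h) (ne_of_gt hpos_i)
    · exact absurd (horth_i j hj h) (ne_of_gt hpos_j)
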